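/- Let E be a real inner product space, let x₁, x₀, b, c ∈ E, set a := x₁ − x₀, and let τ > 0, τ' > 0. Then ⟨x₁ + γ₃·a − γ₂·b + γ₁·c, a⟩ ≥ (1/2)‖x₁‖² − (1/2)‖x₀‖² + ((1 + 2γ₃ − 2γ₂ − 2γ₁)/2)·‖a‖² + ((γ₂ + γ₁)/2)·(‖a‖² − ‖b‖²) + (γ₁/2)·(‖b‖² − ‖c‖²). (With x₁ = wⁿ⁺¹, x₀ = wⁿ, b = δwⁿ, c = δwⁿ⁻¹ this is the energy lower bound for the diffusion term a(ŵⁿ⁺¹, δwⁿ⁺¹) in the BDF2-TF stability proof.) -/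
import Mathlib


open scoped RealInnerProductSpace

/-- BDF2-TF γ-coefficients. -/
noncomputable def gamma3 (τ τ' : ℝ) : ℝ :=
  τ * τ' * (1 + τ) / ((1 + 2 * τ) * (1 + τ' * (1 + τ)))
noncomputable def gamma2 (τ τ' : ℝ) : ℝ :=
  τ ^ 2 * τ' * (1 + τ) * (1 + τ' * (2 + τ)) /
    ((1 + 2 * τ) * (1 + τ') * (1 + τ' * (1 + τ)))
noncomputable def gamma1 (τ τ' : ℝ) : ℝ :=
  τ ^ 2 * τ' ^ 3 * (1 + τ) ^ 2 / ((1 + 2 * τ) * (1 + τ') * (1 + τ' * (1 + τ)))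

/-- The energy lower bound for the diffusion term `a(ŵⁿ⁺¹, δwⁿ⁺¹)` in the
BDF2-TF stability proof. -/
theorem bdf2tf_diffusion_energy_lower_bound
    {E : Type*} [NormedAddCommGroup E] [InnerProductSpace ℝ E]
    (x1 x0 b c : E) (a : E) (ha : a = x1 - x0)
    (τ τ' : ℝ) (hτ : 0 < τ) (hτ' : 0 < τ') :
    ⟪x1 + gamma3 τ τ' • a - gamma2 τ τ' • b + gamma1 τ τ' • c, a⟫
      ≥ (1 / 2) * ‖x1‖ ^ 2 - (1 / 2) * ‖x0‖ ^ 2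
        + ((1 + 2 * gamma3 τ τ' - 2 * gamma2 τ τ' - 2 * gamma1 τ τ') / 2) * ‖a‖ ^ 2
        + ((gamma2 τ τ' + gamma1 τ τ') / 2) * (‖a‖ ^ 2 - ‖b‖ ^ 2)
        + (gamma1 τ τ' / 2) * (‖b‖ ^ 2 - ‖c‖ ^ 2) := by
  have hg1 : 0 ≤ gamma1 τ τ' := by unfold gamma1; positivity
  have hg2 : 0 ≤ gamma2 τ τ' := by unfold gamma2; positivity
  have e1 : ⟪x1, a⟫ = 1/2*‖x1‖^2 - 1/2*‖x0‖^2 + 1/2*‖a‖^2 := by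
    have h : ‖a‖^2 = ‖x1‖^2 - 2*⟪x1,x0⟫ + ‖x0‖^2 := by
      rw [ha, norm_sub_sq_real]
    have h2 : ⟪x1, a⟫ = ‖x1‖^2 - ⟪x1,x0⟫ := by
      rw [ha, inner_sub_right, real_inner_self_eq_norm_sq]
    linarith
  have eaa : ⟪a, a⟫ = ‖a‖^2 := real_inner_self_eq_norm_sq a
  have eb : ‖a - b‖^2 = ‖a‖^2 - 2*⟪b,a⟫ + ‖b‖^2 := by
    rw [norm_sub_sq_real, real_inner_comm]
  have ec : ‖a + c‖^2 = ‖a‖^2 + 2*⟪c,a⟫ + ‖c‖^2 := by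
    rw [norm_add_sq_real, real_inner_comm]
  have hb2 : 0 ≤ gamma2 τ τ' * ‖a - b‖^2 := mul_nonneg hg2 (sq_nonneg _)
  have hc2 : 0 ≤ gamma1 τ τ' * ‖a + c‖^2 := mul_nonneg hg1 (sq_nonneg _)
  simp only [inner_add_left, inner_sub_left, inner_smul_left, RCLike.ofReal_real_eq_id, id, conj_trivial]
  rw [eaa, e1]
  nlinarith [hb2, hc2, eb, ec]
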